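/- arXiv:1509.08421 — 3 statements merged into one kernel-verified Lean document; each statement's English description precedes it below -/
import Mathlib

section
/- The hypergeometric series A(z) = Σ_{i≥0} (6i)!/((3i)!(2i)!) (−z)^i/1728^i and B(z) = Σ_{i≥0} (6i)!/((3i)!(2i)!) · (1+6i)/(1−6i) · (−z)^i/1728^i satisfy the identity A^e(z)B^e(z) − A^o(z)B^o(z) = 1 as formal power series, where f^e and f^o denote even and odd parts. -/
/-- The Faber–Zagier series `A(z) = Σ (6i)!/((3i)!(2i)!) (−z)^i/1728^i`. -/
noncomputable def FZA : PowerSeries ℚ :=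
  PowerSeries.mk fun i =>
    ((6 * i).factorial : ℚ) / ((3 * i).factorial * (2 * i).factorial) * (-1) ^ i / 1728 ^ i

/-- The Faber–Zagier series
`B(z) = Σ (6i)!/((3i)!(2i)!) · (1+6i)/(1−6i) · (−z)^i/1728^i`. -/
noncomputable def FZB : PowerSeries ℚ :=
  PowerSeries.mk fun i =>
    ((6 * i).factorial : ℚ) / ((3 * i).factorial * (2 * i).factorial)
      * ((1 + 6 * (i : ℚ)) / (1 - 6 * (i : ℚ))) * (-1) ^ i / 1728 ^ i

/-- The even part of a power series. -/
noncomputable def evenPart (f : PowerSeries ℚ) : PowerSeries ℚ :=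
  PowerSeries.mk fun n => if Even n then PowerSeries.coeff n f else 0

/-- The odd part of a power series. -/
noncomputable def oddPart (f : PowerSeries ℚ) : PowerSeries ℚ :=
  PowerSeries.mk fun n => if Even n then 0 else PowerSeries.coeff n f

noncomputable def fzc (i : ℕ) : ℚ := ((6*i).factorial : ℚ) / ((3*i).factorial * (2*i).factorial)

lemma fac_ne (k : ℕ) : ((k.factorial : ℚ)) ≠ 0 := by
  exact_mod_cast k.factorial_ne_zero

lemma one_sub_six_ne (i : ℕ) : (1 - 6*(i:ℚ)) ≠ 0 := by
  intro h
  have h1 : ((1:ℕ):ℚ) = ((6*i : ℕ):ℚ) := by push_cast; linarith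
  have := Nat.cast_injective h1
  omega

lemma fzc_rec (i : ℕ) : ((i:ℚ)+1) * fzc (i+1) = 12*(6*(i:ℚ)+1)*(6*(i:ℚ)+5) * fzc i := by
  have e6 : ((6*(i+1)).factorial : ℚ)
      = (6*(i:ℚ)+6)*(6*(i:ℚ)+5)*(6*(i:ℚ)+4)*(6*(i:ℚ)+3)*(6*(i:ℚ)+2)*(6*(i:ℚ)+1) * (6*i).factorial := by
    have h : 6*(i+1) = 6*i+1+1+1+1+1+1 := by ring
    rw [h]; simp [Nat.factorial_succ]; ring
  have e3 : ((3*(i+1)).factorial : ℚ)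
      = (3*(i:ℚ)+3)*(3*(i:ℚ)+2)*(3*(i:ℚ)+1) * (3*i).factorial := by
    have h : 3*(i+1) = 3*i+1+1+1 := by ring
    rw [h]; simp [Nat.factorial_succ]; ring
  have e2 : ((2*(i+1)).factorial : ℚ)
      = (2*(i:ℚ)+2)*(2*(i:ℚ)+1) * (2*i).factorial := by
    have h : 2*(i+1) = 2*i+1+1 := by ring
    rw [h]; simp [Nat.factorial_succ]; ring
  unfold fzc
  rw [e6, e3, e2]
  field_simp
  ring

noncomputable def fzg (i : ℕ) : ℚ := fzc i / (1 - 6*(i:ℚ))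

lemma fzg_rec (i : ℕ) :
    fzg (i+1) = -12*(6*(i:ℚ)+1)*(1-6*(i:ℚ)) * fzg i / ((i:ℚ)+1) := by
  have h := fzc_rec i
  have hi1 : ((i:ℚ)+1) ≠ 0 := by positivity
  have h5 := one_sub_six_ne (i+1)
  have h6 := one_sub_six_ne i
  unfold fzg
  push_cast at h5 ⊢
  field_simp
  linear_combination h

noncomputable def fzu (i m : ℕ) : ℚ := (-1)^i * fzg i * fzg m * (1 - 36*(i:ℚ)*(m:ℚ))
noncomputable def fzw (i m : ℕ) : ℚ := (-1)^i * fzg i * fzg m * (i:ℚ) * (36*(m:ℚ)^2 - 1)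

lemma key (i k : ℕ) :
    ((i:ℚ)+(k:ℚ)+1) * fzu i (k+1) = fzw (i+1) k - fzw i (k+1) := by
  have hi1 : ((i:ℚ)+1) ≠ 0 := by positivity
  have hk1 : ((k:ℚ)+1) ≠ 0 := by positivity
  unfold fzu fzw
  rw [fzg_rec i, fzg_rec k]
  push_cast
  field_simp
  ring

lemma key_end (n : ℕ) : (n:ℚ) * fzu n 0 = - fzw n 0 := by
  unfold fzu fzw
  push_cast
  ring

lemma usum (n : ℕ) (hn : 1 ≤ n) :
    ∑ i ∈ Finset.range (n+1), fzu i (n-i) = 0 := by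
  have hn0 : (n:ℚ) ≠ 0 := by exact_mod_cast Nat.one_le_iff_ne_zero.mp hn
  have hmul : (n:ℚ) * ∑ i ∈ Finset.range (n+1), fzu i (n-i) = 0 := by
    rw [Finset.mul_sum, Finset.sum_range_succ]
    have hstep : ∀ i ∈ Finset.range n,
        (n:ℚ) * fzu i (n-i) = fzw (i+1) (n-(i+1)) - fzw i (n-i) := by
      intro i hi
      have hi' : i < n := Finset.mem_range.mp hi
      have hk : n - i = (n - (i+1)) + 1 := by omega
      have hcast : ((i:ℚ) + ((n - (i+1) : ℕ):ℚ) + 1) = (n:ℚ) := by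
        have : i + (n - (i+1)) + 1 = n := by omega
        exact_mod_cast congrArg (Nat.cast : ℕ → ℚ) this
      rw [hk, ← hcast]
      exact key i (n - (i+1))
    rw [Finset.sum_congr rfl hstep, Finset.sum_range_sub (fun i => fzw i (n-i)),
      Nat.sub_self, key_end]
    have h0 : fzw 0 (n-0) = 0 := by unfold fzw; push_cast; ring
    rw [h0]
    ring
  exact (mul_eq_zero.mp hmul).resolve_left hn0

noncomputable def fzt (n i : ℕ) : ℚ :=
  (-1)^i * fzc i * fzc (n-i) * ((1+6*((n-i : ℕ):ℚ))/(1-6*((n-i : ℕ):ℚ)))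

lemma pair_core (i j : ℕ) :
    fzc i * fzc j * ((1+6*(j:ℚ))/(1-6*(j:ℚ))) + fzc j * fzc i * ((1+6*(i:ℚ))/(1-6*(i:ℚ)))
      = 2 * (fzc i/(1-6*(i:ℚ))) * (fzc j/(1-6*(j:ℚ))) * (1-36*(i:ℚ)*(j:ℚ)) := by
  have h1 := one_sub_six_ne i
  have h2 := one_sub_six_ne j
  field_simp
  ring

lemma neg_one_sq' (i : ℕ) : ((-1:ℚ))^i * ((-1:ℚ))^i = 1 := by
  rcases Nat.even_or_odd i with h | h
  · rw [h.neg_one_pow]; norm_num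
  · rw [h.neg_one_pow]; norm_num

lemma pair_eq (n i : ℕ) (hi : i ≤ n) (hn : Even n) :
    fzt n i + fzt n (n-i) = 2 * fzu i (n-i) := by
  obtain ⟨j, hj⟩ : ∃ j, n - i = j := ⟨_, rfl⟩
  have hsub : n - j = i := by omega
  have hsign : ((-1:ℚ))^j = (-1)^i := by
    have hadd : (-1:ℚ)^j * (-1)^i = 1 := by
      rw [← pow_add]
      have : j + i = n := by omega
      rw [this]
      exact hn.neg_one_pow
    calc (-1:ℚ)^j = (-1:ℚ)^j * ((-1)^i * (-1)^i) := by rw [neg_one_sq' i]; ring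
      _ = ((-1:ℚ)^j * (-1)^i) * (-1)^i := by ring
      _ = (-1)^i := by rw [hadd]; ring
  unfold fzt fzu fzg
  rw [hj, hsub, hsign]
  have := pair_core i j
  calc (-1:ℚ)^i * fzc i * fzc j * ((1+6*(j:ℚ))/(1-6*(j:ℚ)))
        + (-1)^i * fzc j * fzc i * ((1+6*(i:ℚ))/(1-6*(i:ℚ)))
      = (-1)^i * (fzc i * fzc j * ((1+6*(j:ℚ))/(1-6*(j:ℚ)))
          + fzc j * fzc i * ((1+6*(i:ℚ))/(1-6*(i:ℚ)))) := by ring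
    _ = (-1)^i * (2 * (fzc i/(1-6*(i:ℚ))) * (fzc j/(1-6*(j:ℚ))) * (1-36*(i:ℚ)*(j:ℚ))) := by
          rw [this]
    _ = 2 * ((-1)^i * (fzc i/(1-6*(i:ℚ))) * (fzc j/(1-6*(j:ℚ))) * (1-36*(i:ℚ)*(j:ℚ))) := by
          ring

lemma fz_tsum (n : ℕ) (hn : Even n) (hn1 : 1 ≤ n) :
    ∑ i ∈ Finset.range (n+1), fzt n i = 0 := by
  have hrefl : ∑ i ∈ Finset.range (n+1), fzt n (n-i)
      = ∑ i ∈ Finset.range (n+1), fzt n i := by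
    have := Finset.sum_range_reflect (fun i => fzt n i) (n+1)
    simpa using this
  have h2 : (2:ℚ) * ∑ i ∈ Finset.range (n+1), fzt n i
      = ∑ i ∈ Finset.range (n+1), 2 * fzu i (n-i) := by
    rw [two_mul]
    nth_rewrite 2 [← hrefl]
    rw [← Finset.sum_add_distrib]
    refine Finset.sum_congr rfl ?_
    intro i hi
    exact pair_eq n i (Nat.lt_succ_iff.mp (Finset.mem_range.mp hi)) hn
  have h3 : ∑ i ∈ Finset.range (n+1), 2 * fzu i (n-i) = 0 := by
    rw [← Finset.mul_sum, usum n hn1, mul_zero]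
  have := h2.trans h3
  linarith

noncomputable def coefA (i : ℕ) : ℚ := fzc i * (-1)^i / 1728^i
noncomputable def coefB (i : ℕ) : ℚ :=
  fzc i * ((1 + 6*(i:ℚ))/(1 - 6*(i:ℚ))) * (-1)^i / 1728^i

lemma coeff_FZA (i : ℕ) : PowerSeries.coeff i FZA = coefA i := by
  simp [FZA, coefA, fzc, PowerSeries.coeff_mk]

lemma coeff_FZB (i : ℕ) : PowerSeries.coeff i FZB = coefB i := by
  simp [FZB, coefB, fzc, PowerSeries.coeff_mk]

lemma term_even (n i : ℕ) (hi : i ≤ n) (hn : Even n) :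
    (if Even i then coefA i else 0) * (if Even (n-i) then coefB (n-i) else 0)
      - (if Even i then 0 else coefA i) * (if Even (n-i) then 0 else coefB (n-i))
    = fzt n i / 1728^n := by
  have hpar : Even (n - i) ↔ Even i := by rw [Nat.even_sub hi]; simp [hn]
  have hpow : (1728:ℚ)^i * 1728^(n-i) = 1728^n := by
    rw [← pow_add, Nat.add_sub_cancel' hi]
  by_cases h : Even i
  · have h2 : Even (n-i) := hpar.mpr h
    rw [if_pos h, if_pos h2, if_pos h, if_pos h2]
    unfold coefA coefB fzt
    rw [h.neg_one_pow, h2.neg_one_pow, ← hpow]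
    ring
  · have h2 : ¬ Even (n-i) := fun hc => h (hpar.mp hc)
    rw [if_neg h, if_neg h2, if_neg h, if_neg h2]
    unfold coefA coefB fzt
    rw [(Nat.not_even_iff_odd.mp h).neg_one_pow,
        (Nat.not_even_iff_odd.mp h2).neg_one_pow, ← hpow]
    ring

lemma term_odd (n i : ℕ) (hi : i ≤ n) (hn : ¬ Even n) :
    (if Even i then coefA i else 0) * (if Even (n-i) then coefB (n-i) else 0)
      - (if Even i then 0 else coefA i) * (if Even (n-i) then 0 else coefB (n-i))
    = 0 := by
  have hpar : ¬ (Even (n - i) ↔ Even i) := by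
    rw [Nat.even_sub hi]; tauto
  by_cases h : Even i
  · have h2 : ¬ Even (n-i) := fun hc => hpar ⟨fun _ => h, fun _ => hc⟩
    simp [h, h2]
  · have h2 : Even (n-i) := by
      rcases Nat.even_or_odd (n-i) with hc | hc
      · exact hc
      · exact absurd (iff_of_false (Nat.not_even_iff_odd.mpr hc) h) hpar
    simp [h, h2]

/-- The Faber–Zagier series satisfy `A^e B^e − A^o B^o = 1`. -/
theorem FZ_even_odd_identity :
    evenPart FZA * evenPart FZB - oddPart FZA * oddPart FZB = 1 := by
  ext n
  rw [map_sub, PowerSeries.coeff_mul, PowerSeries.coeff_mul, ← Finset.sum_sub_distrib,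
    Finset.Nat.sum_antidiagonal_eq_sum_range_succ_mk, PowerSeries.coeff_one]
  simp only [evenPart, oddPart, PowerSeries.coeff_mk, coeff_FZA, coeff_FZB]
  by_cases h0 : n = 0
  · subst h0
    norm_num [coefA, coefB, fzc]
  · rw [if_neg h0]
    by_cases he : Even n
    · rw [Finset.sum_congr rfl
        (fun i hi => term_even n i (Nat.lt_succ_iff.mp (Finset.mem_range.mp hi)) he),
        ← Finset.sum_div, fz_tsum n he (Nat.one_le_iff_ne_zero.mpr h0), zero_div]
    · rw [Finset.sum_congr rfl
        (fun i hi => term_odd n i (Nat.lt_succ_iff.mp (Finset.mem_range.mp hi)) he)]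
      exact Finset.sum_const_zero
end

section
/- Let ω_{g,n} be the multilinear form on V = Q[√φ]⟨1, H̃⟩ defined on the basis by ω_{g,n}(1^{⊗a}, H̃^{⊗b}) = 2^g φ^{(g−1+b)/2} if g−1+b is even and 0 otherwise (a+b = n). Then ω satisfies the genus-reduction gluing identity: for g ≥ 1, Σ_{μ,ν} ω_{g−1,n+2}(v_1,…,v_n, e_μ, e_ν) η^{μν} = ω_{g,n}(v_1,…,v_n), where {e_μ} = {1, H̃} and η^{μν} is the inverse Gram matrix [[0,1],[1,0]] (so the inserted bivector is 1⊗H̃ + H̃⊗1). -/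
/-- The TQFT underlying equivariant Gromov–Witten theory of `ℙ¹`: its value on `b`
insertions of `H̃` (and any number of insertions of `1`) in genus `g` is
`2^g φ^{(g−1+b)/2} = 2^g (√φ)^{g−1+b}` if `g−1+b` is even (i.e. `g+b` odd), else `0`. -/
noncomputable def tqftP1 {K : Type*} [CommRing K] (s : K) (g b : ℕ) : K :=
  if Odd (g + b) then 2 ^ g * s ^ (g + b - 1) else 0

/-- The number of insertions of `H̃` among the basis vectors `(e 0, e 1) = (1, H̃)`. -/
def countH {n : ℕ} (v : Fin n → Fin 2) : ℕ :=
  (Finset.univ.filter fun i => v i = 1).card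

lemma countH_snoc {n : ℕ} (v : Fin n → Fin 2) (x : Fin 2) :
    countH (Fin.snoc v x) = countH v + (if x = 1 then 1 else 0) := by
  simp only [countH, Finset.card_filter]
  rw [Fin.sum_univ_castSucc]
  simp [Fin.snoc]

/-- Genus-reduction gluing identity for the TQFT `ω` with
`ω_{g,n}(1^{⊗a}, H̃^{⊗b}) = 2^g φ^{(g−1+b)/2}` (if `g−1+b` even, else `0`):
for `g ≥ 1`, `Σ_{μ,ν} η^{μν} ω_{g−1,n+2}(v₁,…,vₙ,e_μ,e_ν) = ω_{g,n}(v₁,…,vₙ)`,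
where `η^{μν} = [[0,1],[1,0]]`. -/
theorem tqft_glue_nonseparating {K : Type*} [CommRing K] (s : K)
    (g n : ℕ) (hg : 1 ≤ g) (v : Fin n → Fin 2)
    (J : Matrix (Fin 2) (Fin 2) K) (hJ : J = !![0, 1; 1, 0]) :
    ∑ μ : Fin 2, ∑ ν : Fin 2,
        J μ ν * tqftP1 s (g - 1) (countH (Fin.snoc (Fin.snoc v μ) ν))
      = tqftP1 s g (countH v) := by
  subst hJ
  simp only [Fin.sum_univ_two, countH_snoc]
  norm_num
  obtain ⟨g, rfl⟩ := Nat.exists_eq_add_of_le hg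
  simp only [Nat.add_sub_cancel_left, tqftP1]
  have h1 : g + (countH v + 1) = 1 + g + countH v := by ring
  rw [h1]
  by_cases h : Odd (1 + g + countH v)
  · rw [if_pos h, if_pos h]
    have : 1 + g + countH v - 1 = g + countH v := by omega
    rw [this]; ring
  · rw [if_neg h, if_neg h]; ring
end

section
/- The covariance matrix identity: let P, λ_0,…,λ_m be elements of a field with P ≠ λ_j for all j, set Δ = Σ_{k=0}^m ∏_{j≠k}(P−λ_j). Define the (m+1)×(m+1) matrix C with entries C_{kl} = (1/Δ)·(−∏_{j∉{k,l}}(P−λ_j)) for k≠l and C_{kk} = (1/Δ)·Σ_{m'≠k} ∏_{j∉{k,m'}}(P−λ_j). Then C is the inverse of the conditional Gaussian quadratic form: C·D restricted to the hyperplane Σ T_j = 0 is the identity, where D = diag(P−λ_0,…,P−λ_m); concretely, for all k: Σ_l C_{kl}(P−λ_l) v_l = v_k for every vector v with Σ_j v_j = 0. -/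
/-- The covariance matrix of the conditional Gaussian distribution on the
hyperplane `Σ Tⱼ = 0` with density `exp(−Σ (P−λⱼ)Tⱼ²/2)`: with
`Δ = Σ_k ∏_{j≠k}(P−λⱼ) ≠ 0` and `C_{kl} = −(1/Δ)∏_{j∉{k,l}}(P−λⱼ)` for `k ≠ l`,
`C_{kk} = (1/Δ)Σ_{m'≠k}∏_{j∉{k,m'}}(P−λⱼ)`, the matrix `C` inverts the quadratic
form `diag(P−λⱼ)` on the hyperplane: `Σ_l C_{kl}(P−λ_l)v_l = v_k` whenever
`Σ_j v_j = 0`. -/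
theorem covariance_matrix_inverse {K : Type*} [Field K] (m : ℕ) (P : K)
    (lam : Fin (m + 1) → K) (hP : ∀ j, P ≠ lam j)
    (Δ : K) (hΔdef : Δ = ∑ k, ∏ j ∈ Finset.univ.erase k, (P - lam j)) (hΔ : Δ ≠ 0)
    (C : Fin (m + 1) → Fin (m + 1) → K)
    (hC : ∀ k l, C k l =
      if k = l then
        Δ⁻¹ * ∑ m' ∈ Finset.univ.erase k,
          ∏ j ∈ (Finset.univ.erase k).erase m', (P - lam j)
      else
        Δ⁻¹ * (-(∏ j ∈ (Finset.univ.erase k).erase l, (P - lam j))))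
    (v : Fin (m + 1) → K) (hv : ∑ j, v j = 0) (k : Fin (m + 1)) :
    ∑ l, C k l * (P - lam l) * v l = v k := by
  classical
  set A := ∏ j ∈ Finset.univ.erase k, (P - lam j) with hA
  have hvk : ∑ l ∈ Finset.univ.erase k, v l = -v k := by
    rw [Finset.sum_erase_eq_sub (Finset.mem_univ k), hv]; ring
  have h1 : ∀ l ∈ Finset.univ.erase k, C k l * (P - lam l) * v l
      = Δ⁻¹ * (-A) * v l := by
    intro l hl
    have hlk : l ≠ k := Finset.ne_of_mem_erase hl
    rw [hC, if_neg (Ne.symm hlk)]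
    have hprod : (P - lam l) * ∏ j ∈ (Finset.univ.erase k).erase l, (P - lam j) = A :=
      Finset.mul_prod_erase (Finset.univ.erase k) (fun j => P - lam j) hl
    calc Δ⁻¹ * (-(∏ j ∈ (Finset.univ.erase k).erase l, (P - lam j))) * (P - lam l) * v l
        = Δ⁻¹ * (-((P - lam l) * ∏ j ∈ (Finset.univ.erase k).erase l, (P - lam j))) * v l := by
          ring
      _ = Δ⁻¹ * (-A) * v l := by rw [hprod]
  have h2 : C k k * (P - lam k) = Δ⁻¹ * (Δ - A) := by
    rw [hC, if_pos rfl]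
    have hsum : ∀ m' ∈ Finset.univ.erase k,
        (P - lam k) * ∏ j ∈ (Finset.univ.erase k).erase m', (P - lam j)
        = ∏ j ∈ Finset.univ.erase m', (P - lam j) := by
      intro m' hm'
      have hmk : m' ≠ k := Finset.ne_of_mem_erase hm'
      have hk : k ∈ Finset.univ.erase m' := Finset.mem_erase.mpr ⟨hmk.symm, Finset.mem_univ k⟩
      rw [Finset.erase_right_comm]
      exact Finset.mul_prod_erase (Finset.univ.erase m') (fun j => P - lam j) hk
    have hΔA : ∑ m' ∈ Finset.univ.erase k, ∏ j ∈ Finset.univ.erase m', (P - lam j)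
        = Δ - A := by
      rw [Finset.sum_erase_eq_sub (Finset.mem_univ k), ← hΔdef]
    calc Δ⁻¹ * (∑ m' ∈ Finset.univ.erase k,
          ∏ j ∈ (Finset.univ.erase k).erase m', (P - lam j)) * (P - lam k)
        = Δ⁻¹ * ∑ m' ∈ Finset.univ.erase k,
            (∏ j ∈ (Finset.univ.erase k).erase m', (P - lam j)) * (P - lam k) := by
          rw [mul_assoc, Finset.sum_mul]
      _ = Δ⁻¹ * ∑ m' ∈ Finset.univ.erase k, ∏ j ∈ Finset.univ.erase m', (P - lam j) := by
          refine congrArg _ (Finset.sum_congr rfl fun m' hm' => ?_)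
          rw [mul_comm]; exact hsum m' hm'
      _ = Δ⁻¹ * (Δ - A) := by rw [hΔA]
  rw [← Finset.add_sum_erase Finset.univ (fun l => C k l * (P - lam l) * v l)
    (Finset.mem_univ k), Finset.sum_congr rfl h1, ← Finset.mul_sum, hvk]
  have h3 : C k k * (P - lam k) * v k = Δ⁻¹ * (Δ - A) * v k := by rw [h2]
  rw [h3]
  field_simp
  ring
end
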